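/- Let Ψ(σ²) = σ²/2 - (2σ/√(2π))·e^{-2/σ²} + Q(2/σ)·(4 - σ²) for σ > 0, where Q(x) = ∫_x^∞ (1/√(2π)) e^{-u²/2} du. Then for every N₀ > 0 and every 0 ≤ β < 2, the fixed-point equation σ² = N₀ + β·Ψ(σ²) has a unique positive solution. -/

import Mathlib

open MeasureTheory Set Filter Real Topology

noncomputable def gaussPdf (u : ℝ) : ℝ := (1 / Real.sqrt (2 * Real.pi)) * Real.exp (-u ^ 2 / 2)

lemma gauss_cont : Continuous gaussPdf := by
  unfold gaussPdf; continuity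

lemma gauss_nonneg (u : ℝ) : 0 ≤ gaussPdf u := by
  unfold gaussPdf; positivity

lemma gauss_integrable : Integrable gaussPdf := by
  unfold gaussPdf
  have h := (integrable_exp_neg_mul_sq (b := (1:ℝ)/2) (by norm_num)).const_mul
    (1 / Real.sqrt (2 * Real.pi))
  convert h using 2 with u
  ring_nf

noncomputable def QQ (x : ℝ) : ℝ := ∫ u in Set.Ioi x, gaussPdf u

lemma QQ_nonneg (x : ℝ) : 0 ≤ QQ x :=
  setIntegral_nonneg measurableSet_Ioi (fun u _ => gauss_nonneg u)

lemma QQ_sub' {a b : ℝ} (h : a ≤ b) : QQ a - QQ b = ∫ u in a..b, gaussPdf u := by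
  have hu : Ioc a b ∪ Ioi b = Ioi a := Ioc_union_Ioi_eq_Ioi h
  have hd : Disjoint (Ioc a b) (Ioi b) := Ioc_disjoint_Ioi le_rfl
  have := setIntegral_union hd measurableSet_Ioi
    (gauss_integrable.integrableOn) (gauss_integrable.integrableOn)
  rw [hu] at this
  rw [intervalIntegral.integral_of_le h]
  unfold QQ
  rw [this]; ring

lemma QQ_sub (a b : ℝ) : QQ a - QQ b = ∫ u in a..b, gaussPdf u := by
  rcases le_total a b with h | h
  · exact QQ_sub' h
  · rw [intervalIntegral.integral_symm]
    have := QQ_sub' h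
    linarith

lemma hasDerivAt_QQ (x : ℝ) : HasDerivAt QQ (-(gaussPdf x)) x := by
  have key : ∀ y, QQ y = QQ 0 - ∫ u in (0:ℝ)..y, gaussPdf u := by
    intro y; have := QQ_sub 0 y; linarith
  have h : HasDerivAt (fun y => ∫ u in (0:ℝ)..y, gaussPdf u) (gaussPdf x) x :=
    intervalIntegral.integral_hasDerivAt_right
      (gauss_integrable.intervalIntegrable)
      gauss_cont.aestronglyMeasurable.stronglyMeasurableAtFilter
      gauss_cont.continuousAt
  have := (hasDerivAt_const x (QQ 0)).sub h
  simpa [key] using this.congr_of_eventuallyEq (Eventually.of_forall fun y => (key y))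

lemma QQ_tendsto : Tendsto QQ atTop (𝓝 0) := by
  have h := intervalIntegral_tendsto_integral_Ioi (μ := volume) 0
    (gauss_integrable.integrableOn) (tendsto_id (α := ℝ))
  have h2 : Tendsto (fun x => QQ 0 - ∫ u in (0:ℝ)..x, gaussPdf u) atTop (𝓝 (QQ 0 - QQ 0)) :=
    (tendsto_const_nhds).sub h
  simp only [sub_self] at h2
  refine h2.congr fun x => ?_
  have := QQ_sub 0 x
  linarith

lemma tendsto_sqrt_zero : Tendsto Real.sqrt (𝓝[>] 0) (𝓝[>] 0) := by
  apply tendsto_nhdsWithin_of_tendsto_nhds_of_eventually_within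
  · simpa using (Real.continuous_sqrt.tendsto 0).mono_left nhdsWithin_le_nhds
  · filter_upwards [self_mem_nhdsWithin] with v hv
    exact Real.sqrt_pos.mpr hv

lemma tendsto_two_div_sqrt : Tendsto (fun v => 2 / Real.sqrt v) (𝓝[>] 0) atTop := by
  have h1 : Tendsto (fun x : ℝ => 2 / x) (𝓝[>] 0) atTop := by
    simpa [div_eq_mul_inv] using tendsto_inv_nhdsGT_zero.const_mul_atTop (by norm_num : (0:ℝ) < 2)
  exact h1.comp tendsto_sqrt_zero

lemma tendsto_g_zero :
    Tendsto (fun v => v / 2 - 2 * Real.sqrt v / Real.sqrt (2 * Real.pi) * Real.exp (-2 / v)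
        + QQ (2 / Real.sqrt v) * (4 - v)) (𝓝[>] 0) (𝓝 0) := by
  have h1 : Tendsto (fun v : ℝ => v / 2) (𝓝[>] 0) (𝓝 0) := by
    have := ((continuous_id.div_const 2).tendsto (0:ℝ)).mono_left
      (nhdsWithin_le_nhds (s := Set.Ioi (0:ℝ)))
    simpa using this
  have hexp : Tendsto (fun v : ℝ => Real.exp (-2 / v)) (𝓝[>] 0) (𝓝 0) := by
    apply Real.tendsto_exp_atBot.comp
    have h := tendsto_inv_nhdsGT_zero (𝕜 := ℝ)
    have h2 := h.const_mul_atTop (by norm_num : (0:ℝ) < 2)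
    have h3 : Tendsto (fun x : ℝ => -(2 * x⁻¹)) (𝓝[>] 0) atBot :=
      tendsto_neg_atTop_atBot.comp h2
    exact h3.congr fun x => by ring
  have hsq : Tendsto (fun v : ℝ => 2 * Real.sqrt v / Real.sqrt (2 * Real.pi)) (𝓝[>] 0) (𝓝 0) := by
    have := (tendsto_sqrt_zero.mono_right nhdsWithin_le_nhds).const_mul (2:ℝ)
    simpa using this.div_const (Real.sqrt (2 * Real.pi))
  have h2 : Tendsto (fun v => 2 * Real.sqrt v / Real.sqrt (2 * Real.pi) * Real.exp (-2 / v))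
      (𝓝[>] 0) (𝓝 0) := by
    simpa using hsq.mul hexp
  have h3 : Tendsto (fun v => QQ (2 / Real.sqrt v) * (4 - v)) (𝓝[>] 0) (𝓝 0) := by
    have hQ : Tendsto (fun v => QQ (2 / Real.sqrt v)) (𝓝[>] 0) (𝓝 0) :=
      QQ_tendsto.comp tendsto_two_div_sqrt
    have h4 : Tendsto (fun v : ℝ => (4:ℝ) - v) (𝓝[>] 0) (𝓝 4) := by
      have hc : Continuous (fun v : ℝ => (4:ℝ) - v) := continuous_const.sub continuous_id
      have := (hc.tendsto (0:ℝ)).mono_left (nhdsWithin_le_nhds (s := Set.Ioi (0:ℝ)))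
      simpa using this
    simpa using hQ.mul h4
  simpa using (h1.sub h2).add h3

lemma hasDerivAt_g {v : ℝ} (hv : 0 < v) :
    HasDerivAt (fun v => v / 2 - 2 * Real.sqrt v / Real.sqrt (2 * Real.pi) * Real.exp (-2 / v)
        + QQ (2 / Real.sqrt v) * (4 - v))
      (1/2 - QQ (2 / Real.sqrt v) - 2 * gaussPdf (2 / Real.sqrt v) / Real.sqrt v) v := by
  have hv0 : v ≠ 0 := hv.ne'
  have hsv : (0:ℝ) < Real.sqrt v := Real.sqrt_pos.mpr hv
  have hsv0 : Real.sqrt v ≠ 0 := hsv.ne'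
  have hsq : Real.sqrt v ^ 2 = v := Real.sq_sqrt hv.le
  have hpi : (0:ℝ) < Real.sqrt (2 * Real.pi) := Real.sqrt_pos.mpr (by positivity)
  have hs : HasDerivAt Real.sqrt (1 / (2 * Real.sqrt v)) v := Real.hasDerivAt_sqrt hv0
  have hinner : HasDerivAt (fun v => -2 / v) (2 / v ^ 2) v := by
    have := (hasDerivAt_inv hv0).const_mul (-2 : ℝ)
    refine this.congr_deriv ?_
    field_simp
  have he : HasDerivAt (fun v => Real.exp (-2 / v)) (Real.exp (-2 / v) * (2 / v ^ 2)) v :=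
    hinner.exp
  have ht2 : HasDerivAt (fun v => 2 * Real.sqrt v / Real.sqrt (2 * Real.pi) * Real.exp (-2 / v))
      (2 * (1 / (2 * Real.sqrt v)) / Real.sqrt (2 * Real.pi) * Real.exp (-2 / v)
        + 2 * Real.sqrt v / Real.sqrt (2 * Real.pi) * (Real.exp (-2 / v) * (2 / v ^ 2))) v :=
    ((hs.const_mul 2).div_const _).mul he
  have hi : HasDerivAt (fun v => 2 / Real.sqrt v)
      (2 * -(1 / (2 * Real.sqrt v)) / Real.sqrt v ^ 2) v := by
    have := (hs.inv hsv0).const_mul (2:ℝ)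
    refine this.congr_deriv ?_
    field_simp
  have ht3 : HasDerivAt (fun v => QQ (2 / Real.sqrt v))
      (-(gaussPdf (2 / Real.sqrt v)) * (2 * -(1 / (2 * Real.sqrt v)) / Real.sqrt v ^ 2)) v :=
    by exact (hasDerivAt_QQ (2 / Real.sqrt v)).comp v hi
  have ht4 : HasDerivAt (fun v : ℝ => (4 : ℝ) - v) (-1) v := by
    simpa using (hasDerivAt_id v).const_sub 4
  have ht5 := ht3.mul ht4
  have h1 : HasDerivAt (fun v : ℝ => v / 2) (1/2) v := (hasDerivAt_id v).div_const 2
  have := (h1.sub ht2).add ht5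
  refine this.congr_deriv ?_
  have hg : gaussPdf (2 / Real.sqrt v) = 1 / Real.sqrt (2 * Real.pi) * Real.exp (-2 / v) := by
    unfold gaussPdf
    congr 1
    rw [div_pow, hsq]
    congr 1
    field_simp
  set s := Real.sqrt v with hsdef
  rw [hg, ← hsq]
  have hs0 : s ≠ 0 := hsv0
  field_simp
  ring

/-- For the BPSK state-evolution MSE function
Ψ(v) = v/2 - (2√v/√(2π))·e^{-2/v} + Q(2/√v)·(4-v) (v = σ² > 0),
the fixed-point equation σ² = N₀ + β·Ψ(σ²) has a unique positive solution
for every N₀ > 0 and 0 ≤ β < 2. -/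
theorem stmt_9 (N0 β : ℝ) (hN0 : 0 < N0) (hβ0 : 0 ≤ β) (hβ2 : β < 2)
    (Q : ℝ → ℝ)
    (hQ : ∀ x, Q x = ∫ u in Set.Ioi x, (1 / Real.sqrt (2 * Real.pi)) * Real.exp (-u ^ 2 / 2))
    (Ψ : ℝ → ℝ)
    (hΨ : ∀ v, 0 < v → Ψ v =
      v / 2 - 2 * Real.sqrt v / Real.sqrt (2 * Real.pi) * Real.exp (-2 / v)
        + Q (2 / Real.sqrt v) * (4 - v)) :
    ∃! v : ℝ, 0 < v ∧ v = N0 + β * Ψ v := by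
  have hQQ : Q = QQ := funext fun x => by rw [hQ]; rfl
  set g : ℝ → ℝ := fun v => v / 2
      - 2 * Real.sqrt v / Real.sqrt (2 * Real.pi) * Real.exp (-2 / v)
      + QQ (2 / Real.sqrt v) * (4 - v) with hgdef
  set D : ℝ → ℝ := fun v =>
      1/2 - QQ (2 / Real.sqrt v) - 2 * gaussPdf (2 / Real.sqrt v) / Real.sqrt v with hDdef
  have hΨg : ∀ v, 0 < v → Ψ v = g v := by
    intro v hv; rw [hΨ v hv, hQQ]
  have hDle : ∀ v, 0 < v → D v ≤ 1/2 := by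
    intro v hv
    have h1 := QQ_nonneg (2 / Real.sqrt v)
    have h2 := gauss_nonneg (2 / Real.sqrt v)
    have h3 : (0:ℝ) < Real.sqrt v := Real.sqrt_pos.mpr hv
    have : 0 ≤ 2 * gaussPdf (2 / Real.sqrt v) / Real.sqrt v := by positivity
    simp only [hDdef]
    linarith
  have hΨderiv : ∀ v, 0 < v → HasDerivAt Ψ (D v) v := by
    intro v hv
    have hg := hasDerivAt_g hv
    apply hg.congr_of_eventuallyEq
    have hmem : Set.Ioi (0:ℝ) ∈ 𝓝 v := isOpen_Ioi.mem_nhds hv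
    filter_upwards [hmem] with y hy
    exact hΨg y hy
  -- uniqueness
  have huniq : ∀ y z : ℝ, (0 < y ∧ y = N0 + β * Ψ y) → (0 < z ∧ z = N0 + β * Ψ z) → y = z := by
    have key : ∀ y z : ℝ, y < z → (0 < y ∧ y = N0 + β * Ψ y) → (0 < z ∧ z = N0 + β * Ψ z) →
        False := by
      rintro y z hyz ⟨hy0, hy⟩ ⟨hz0, hz⟩
      have hsub : z - y = β * (Ψ z - Ψ y) := by linarith [hy, hz]
      rcases eq_or_lt_of_le hβ0 with hβ | hβ
      · rw [← hβ] at hsub; simp at hsub; linarith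
      have hcont : ContinuousOn Ψ (Set.Icc y z) := fun x hx =>
        ((hΨderiv x (lt_of_lt_of_le hy0 hx.1)).continuousAt).continuousWithinAt
      obtain ⟨c, hc, hceq⟩ := exists_hasDerivAt_eq_slope Ψ D hyz hcont
        (fun x hx => hΨderiv x (lt_trans hy0 hx.1))
      have hcpos : 0 < c := lt_trans hy0 hc.1
      have hle := hDle c hcpos
      have hslope : (Ψ z - Ψ y) / (z - y) = 1 / β := by
        rw [eq_div_iff (ne_of_gt hβ)]
        field_simp
        rw [div_eq_iff (by linarith : z - y ≠ 0)]
        linarith [hsub]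
      have hDc : D c = 1 / β := hceq.trans hslope
      have : 1 / β > 1 / 2 := by
        apply one_div_lt_one_div_of_lt hβ hβ2
      linarith
    intro y z hy hz
    rcases lt_trichotomy y z with h | h | h
    · exact absurd (key y z h hy hz) (fun f => f)
    · exact h
    · exact absurd (key z y h hz hy) (fun f => f)
  -- existence: find a with F a < 0
  set F : ℝ → ℝ := fun v => v - N0 - β * Ψ v with hFdef
  have hFa : ∃ a : ℝ, 0 < a ∧ F a < 0 := by
    have hΨtend : Tendsto Ψ (𝓝[>] 0) (𝓝 0) := by
      refine tendsto_g_zero.congr' ?_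
      filter_upwards [self_mem_nhdsWithin] with v hv
      exact (hΨg v hv).symm
    have hFt : Tendsto F (𝓝[>] 0) (𝓝 (0 - N0 - β * 0)) := by
      apply Tendsto.sub
      apply Tendsto.sub
      · exact tendsto_id.mono_left nhdsWithin_le_nhds
      · exact tendsto_const_nhds
      · exact hΨtend.const_mul β
    have hneg : (0:ℝ) - N0 - β * 0 < 0 := by simp; linarith
    have hev : ∀ᶠ v in 𝓝[>] (0:ℝ), F v < 0 :=
      hFt.eventually (Filter.Tendsto.eventually_lt_const hneg tendsto_id)
    have := (hev.and self_mem_nhdsWithin).exists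
    obtain ⟨a, ha1, ha2⟩ := this
    exact ⟨a, ha2, ha1⟩
  obtain ⟨a, ha0, haneg⟩ := hFa
  -- choose b
  set b : ℝ := max (max 4 a) (2 * (N0 + 1) / (2 - β)) with hbdef
  have hb4 : (4:ℝ) ≤ b := le_trans (le_max_left 4 a) (le_max_left _ _)
  have hab : a ≤ b := le_trans (le_max_right 4 a) (le_max_left _ _)
  have hbN : 2 * (N0 + 1) / (2 - β) ≤ b := le_max_right _ _
  have hb0 : (0:ℝ) < b := by linarith
  have hFb : 0 < F b := by
    have hΨb : Ψ b ≤ b / 2 := by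
      rw [hΨg b hb0]
      have h1 := QQ_nonneg (2 / Real.sqrt b)
      have h2 : QQ (2 / Real.sqrt b) * (4 - b) ≤ 0 :=
        mul_nonpos_of_nonneg_of_nonpos h1 (by linarith)
      have h3 : 0 ≤ 2 * Real.sqrt b / Real.sqrt (2 * Real.pi) * Real.exp (-2 / b) := by
        positivity
      simp only [hgdef]
      linarith
    have h2β : (0:ℝ) < 2 - β := by linarith
    have hbig : 2 * (N0 + 1) ≤ b * (2 - β) := by
      rw [div_le_iff₀ h2β] at hbN
      linarith
    have : β * Ψ b ≤ β * (b / 2) := mul_le_mul_of_nonneg_left hΨb hβ0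
    simp only [hFdef]
    nlinarith
  -- IVT
  have hcontF : ContinuousOn F (Set.Icc a b) := by
    intro x hx
    have hx0 : 0 < x := lt_of_lt_of_le ha0 hx.1
    have : HasDerivAt F (1 - β * D x) x := by
      have := ((hasDerivAt_id x).sub_const N0).sub ((hΨderiv x hx0).const_mul β)
      exact this
    exact this.continuousAt.continuousWithinAt
  have h0mem : (0:ℝ) ∈ Set.Icc (F a) (F b) := ⟨le_of_lt haneg, le_of_lt hFb⟩
  obtain ⟨c, hc, hFc⟩ := intermediate_value_Icc hab hcontF h0mem
  have hc0 : 0 < c := lt_of_lt_of_le ha0 hc.1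
  have hceq : c = N0 + β * Ψ c := by
    simp only [hFdef] at hFc
    linarith
  exact ⟨c, ⟨hc0, hceq⟩, fun y hy => huniq y c hy ⟨hc0, hceq⟩⟩
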